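/- Let L be a finite-dimensional complex Lie algebra and let (h, e, f) be an sl₂-triple in L. Then for every nonzero c ∈ ℂ there exists a Lie algebra automorphism φ of L with φ e = c • e. -/

import Mathlib

open Module LieModule DirectSum

/-- Nilpotent case of Lemma 5.1: if `(h, e, f)` is an `sl₂`-triple in a finite-dimensional
complex Lie algebra, then for every nonzero `c ∈ ℂ` there is a Lie algebra automorphism
mapping `e` to `c • e`. -/
theorem stmt_7 {L : Type*} [LieRing L] [LieAlgebra ℂ L] [FiniteDimensional ℂ L]
    (h e f : L) (hhe : ⁅h, e⁆ = (2 : ℂ) • e) (hhf : ⁅h, f⁆ = (-2 : ℂ) • f)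
    (hef : ⁅e, f⁆ = h) (c : ℂ) (hc : c ≠ 0) :
    ∃ φ : L ≃ₗ⁅ℂ⁆ L, φ e = c • e := by
  set D : Module.End ℂ L := LieModule.toEnd ℂ L L h with hD
  set V : ℂ → Submodule ℂ L := fun μ => D.maxGenEigenspace μ with hV
  have hInt : DirectSum.IsInternal V :=
    DirectSum.isInternal_submodule_of_iSupIndep_of_iSup_eq_top
      (Module.End.independent_maxGenEigenspace D)
      (Module.End.iSup_maxGenEigenspace_eq_top D)
  set E : (⨁ μ, V μ) ≃ₗ[ℂ] L := LinearEquiv.ofBijective (DirectSum.coeLinearMap V) hInt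
  set t : ℂ := Complex.log c / 2 with ht
  set g : ℂ → ℂ := fun μ => Complex.exp (t * μ) with hgdef
  have hg : ∀ μ, g μ ≠ 0 := fun μ => Complex.exp_ne_zero _
  have hgmul : ∀ μ ν, g (μ + ν) = g μ * g ν := by
    intro μ ν
    simp only [hgdef, mul_add, Complex.exp_add]
  set S : (⨁ μ, V μ) ≃ₗ[ℂ] ⨁ μ, V μ :=
    DFinsupp.mapRange.linearEquiv (fun μ => LinearEquiv.smulOfNeZero ℂ (V μ) (g μ) (hg μ))
  set φ : L ≃ₗ[ℂ] L := (E.symm.trans S).trans E with hφdef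
  -- action on eigenvectors
  have key : ∀ μ (x : L), x ∈ V μ → φ x = g μ • x := by
    intro μ x hx
    have h1 : E (DirectSum.lof ℂ ℂ (fun μ => V μ) μ ⟨x, hx⟩) = x := by
      exact DirectSum.coeLinearMap_of V μ ⟨x, hx⟩
    have h2 : E.symm x = DirectSum.lof ℂ ℂ (fun μ => V μ) μ ⟨x, hx⟩ := by
      exact E.symm_apply_eq.mpr h1.symm
    have h3 : S (DirectSum.lof ℂ ℂ (fun μ => V μ) μ ⟨x, hx⟩)
        = DirectSum.lof ℂ ℂ (fun μ => V μ) μ (g μ • ⟨x, hx⟩) := by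
      classical
      simp only [S, DirectSum.lof_eq_of, DirectSum.of, DFinsupp.mapRange.linearEquiv,
        DFinsupp.singleAddHom_apply, LinearEquiv.coe_mk, LinearMap.coe_mk, AddHom.coe_mk]
      exact DFinsupp.mapRange_single (hf := fun μ => map_zero _)
    have h4 : E (DirectSum.lof ℂ ℂ (fun μ => V μ) μ (g μ • ⟨x, hx⟩)) = g μ • x := by
      exact DirectSum.coeLinearMap_of V μ (g μ • ⟨x, hx⟩)
    simp only [hφdef, LinearEquiv.trans_apply, h2, h3, h4]
  -- bracket compatibility
  have hbr : ∀ x y : L, φ ⁅x, y⁆ = ⁅φ x, φ y⁆ := by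
    have htop : ∀ z : L, z ∈ ⨆ μ, V μ := by
      rw [Module.End.iSup_maxGenEigenspace_eq_top D]; intro z; trivial
    intro x y
    induction htop x using Submodule.iSup_induction' with
    | mem μ x hx =>
      induction htop y using Submodule.iSup_induction' with
      | mem ν y hy =>
        have hxy : ⁅x, y⁆ ∈ V (μ + ν) :=
          LieModule.lie_mem_maxGenEigenspace_toEnd hx hy
        rw [key _ _ hxy, key _ _ hx, key _ _ hy, hgmul, smul_lie, lie_smul, smul_smul]
      | zero => simp
      | add y₁ y₂ _ _ ih1 ih2 => rw [lie_add, map_add, ih1, ih2, map_add, lie_add]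
    | zero => simp
    | add x₁ x₂ _ _ ih1 ih2 => rw [add_lie, map_add, ih1, ih2, map_add, add_lie]
  -- e is an eigenvector of eigenvalue 2
  have he2 : e ∈ V 2 := by
    rw [hV, Module.End.mem_maxGenEigenspace]
    refine ⟨1, ?_⟩
    have : D e = (2 : ℂ) • e := by
      rw [hD]; simpa [LieModule.toEnd_apply_apply] using hhe
    simp [pow_one, LinearMap.sub_apply, this]
  have hge : g 2 = c := by
    rw [hgdef]
    show Complex.exp (t * 2) = c
    rw [ht, div_mul_cancel₀ _ (two_ne_zero), Complex.exp_log hc]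
  refine ⟨{ toLieHom := { toLinearMap := (φ : L →ₗ[ℂ] L), map_lie' := fun {x y} => hbr x y },
            invFun := φ.symm, left_inv := φ.left_inv, right_inv := φ.right_inv }, ?_⟩
  show φ e = c • e
  rw [key 2 e he2, hge]
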